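/- Let ζ = e^{2πi/3}, Γ(1) = SU(2,1) ∩ SL₃(ℤ[ζ]), Γ(√−3) the subgroup of g ∈ Γ(1) with g ≡ I₃ mod √−3, Z = ⟨ζI₃⟩ the centre, and Υ = {(g_{ij}) ∈ Γ(√−3) : g_{11} ≡ 1 mod 3}. Then Υ is a subgroup of Γ(√−3), and Γ(√−3) is the internal direct product of Υ and Z: Γ(√−3) = Υ × Z, with Υ of index 3. -/

import Mathlib

noncomputable section

open Matrix Complex

/-- The Hermitian form matrix `J`. -/
def Jmat : Matrix (Fin 3) (Fin 3) ℂ := !![0,0,1; 0,1,0; 1,0,0]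

/-- The group `SU(2,1)` as a subset of 3×3 complex matrices. -/
def SU21 : Set (Matrix (Fin 3) (Fin 3) ℂ) :=
  {g | g.det = 1 ∧ gᴴ * Jmat * g = Jmat}

/-- The symmetric space `H = {τ ∈ ℂ² : 2 Re τ₁ + |τ₂|² < 0}`. -/
def UpperH : Set (ℂ × ℂ) := {τ | 2 * τ.1.re + Complex.normSq τ.2 < 0}

/-- The automorphy factor `j(g,τ) = Cτ + D`. -/
def jcocycle (g : Matrix (Fin 3) (Fin 3) ℂ) (τ : ℂ × ℂ) : ℂ :=
  g 2 0 * τ.1 + g 2 1 * τ.2 + g 2 2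

/-- The action `g*τ = (Aτ+B)/(Cτ+D)`. -/
def act (g : Matrix (Fin 3) (Fin 3) ℂ) (τ : ℂ × ℂ) : ℂ × ℂ :=
  ((g 0 0 * τ.1 + g 0 1 * τ.2 + g 0 2) / jcocycle g τ,
   (g 1 0 * τ.1 + g 1 1 * τ.2 + g 1 2) / jcocycle g τ)

/-- The primitive cube root of unity `ζ = e^{2πi/3}`. -/
def zeta3 : ℂ := Complex.exp (2 * Real.pi * Complex.I / 3)

/-- The ring `ℤ[ζ]` of Eisenstein integers, as a subset of `ℂ`. -/
def Eis : Set ℂ := {x | ∃ a b : ℤ, x = (a : ℂ) + (b : ℂ) * zeta3}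

/-- The element `√−3 = 2ζ + 1 = ζ − ζ²`. -/
def sqrtm3 : ℂ := 2 * zeta3 + 1

/-- `Γ(1) = SU(2,1) ∩ SL₃(ℤ[ζ])`. -/
def Gamma1 : Set (Matrix (Fin 3) (Fin 3) ℂ) :=
  {g | g ∈ SU21 ∧ ∀ i j, g i j ∈ Eis}

/-- The principal congruence subgroup `Γ(√−3)`. -/
def GammaSqrt3 : Set (Matrix (Fin 3) (Fin 3) ℂ) :=
  {g | g ∈ Gamma1 ∧ ∀ i j, ∃ t ∈ Eis,
    g i j - (1 : Matrix (Fin 3) (Fin 3) ℂ) i j = sqrtm3 * t}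

/-- The subgroup `Υ = {g ∈ Γ(√−3) : g₁₁ ≡ 1 mod 3}`. -/
def Upsilon : Set (Matrix (Fin 3) (Fin 3) ℂ) :=
  {g | g ∈ GammaSqrt3 ∧ ∃ t ∈ Eis, g 0 0 - 1 = 3 * t}

/-- The centre `Z = ⟨ζ·I₃⟩` of `SU(2,1)`. -/
def Zcentre : Set (Matrix (Fin 3) (Fin 3) ℂ) :=
  {(1 : Matrix (Fin 3) (Fin 3) ℂ), zeta3 • (1 : Matrix (Fin 3) (Fin 3) ℂ),
    zeta3 ^ 2 • (1 : Matrix (Fin 3) (Fin 3) ℂ)}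

lemma zeta3_pow_three : zeta3 ^ 3 = 1 := by
  rw [zeta3, ← Complex.exp_nat_mul]
  push_cast
  have : (3:ℂ) * (2 * Real.pi * Complex.I / 3) = 2 * Real.pi * Complex.I := by ring
  rw [this, Complex.exp_two_pi_mul_I]

lemma zeta3_ne_one : zeta3 ≠ 1 := by
  intro h
  rw [zeta3, Complex.exp_eq_one_iff] at h
  obtain ⟨n, hn⟩ := h
  have hπ : (Real.pi : ℂ) ≠ 0 := by exact_mod_cast Real.pi_ne_zero
  have h1 : (3:ℂ) * n = 1 := by
    have h2 : ((3:ℂ) * n - 1) * (2 * Real.pi * Complex.I) = 0 := by linear_combination (-3) * hn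
    rcases mul_eq_zero.mp h2 with h3 | h3
    · linear_combination h3
    · exact absurd h3 (by simp [hπ, Complex.I_ne_zero])
  have : ((3 * n : ℤ) : ℂ) = ((1:ℤ):ℂ) := by push_cast; linear_combination h1
  have := Int.cast_injective (α := ℂ) this
  omega

lemma zeta3_quad : zeta3 ^ 2 + zeta3 + 1 = 0 := by
  have h := zeta3_pow_three
  have h2 : (zeta3 - 1) * (zeta3 ^ 2 + zeta3 + 1) = 0 := by linear_combination h
  rcases mul_eq_zero.mp h2 with h3 | h3
  · exact absurd (by linear_combination h3) zeta3_ne_one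
  · exact h3

lemma zeta3_im_ne : zeta3.im ≠ 0 := by
  intro h
  have hq := zeta3_quad
  have hre := congrArg Complex.re hq
  have him := congrArg Complex.im hq
  simp [Complex.add_re, Complex.add_im, Complex.sq_norm, pow_two, Complex.mul_re, Complex.mul_im, h] at hre him
  nlinarith [hre]

lemma eis_repr_unique {a b c d : ℤ} (h : (a : ℂ) + (b : ℂ) * zeta3 = (c : ℂ) + (d : ℂ) * zeta3) :
    a = c ∧ b = d := by
  have him := congrArg Complex.im h
  simp [Complex.add_im, Complex.mul_im] at him
  have hbd : (b : ℝ) = d := by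
    rcases him with h' | h'
    · exact_mod_cast h'
    · exact absurd h' zeta3_im_ne
  have hb : b = d := by exact_mod_cast hbd
  subst hb
  have : (a:ℂ) = c := by linear_combination h
  have : (a:ℝ) = c := by exact_mod_cast congrArg Complex.re this
  exact ⟨by exact_mod_cast this, rfl⟩


lemma Eis_int (n : ℤ) : (n : ℂ) ∈ Eis := ⟨n, 0, by push_cast; ring⟩
lemma Eis_zero : (0:ℂ) ∈ Eis := by exact_mod_cast Eis_int 0
lemma Eis_one : (1:ℂ) ∈ Eis := by exact_mod_cast Eis_int 1
lemma Eis_zeta3 : zeta3 ∈ Eis := ⟨0, 1, by push_cast; ring⟩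
lemma Eis_add {x y : ℂ} (hx : x ∈ Eis) (hy : y ∈ Eis) : x + y ∈ Eis := by
  obtain ⟨a, b, rfl⟩ := hx; obtain ⟨c, d, rfl⟩ := hy
  exact ⟨a + c, b + d, by push_cast; ring⟩
lemma Eis_neg {x : ℂ} (hx : x ∈ Eis) : -x ∈ Eis := by
  obtain ⟨a, b, rfl⟩ := hx; exact ⟨-a, -b, by push_cast; ring⟩
lemma Eis_sub {x y : ℂ} (hx : x ∈ Eis) (hy : y ∈ Eis) : x - y ∈ Eis := by
  rw [sub_eq_add_neg]; exact Eis_add hx (Eis_neg hy)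
lemma Eis_mul {x y : ℂ} (hx : x ∈ Eis) (hy : y ∈ Eis) : x * y ∈ Eis := by
  obtain ⟨a, b, rfl⟩ := hx; obtain ⟨c, d, rfl⟩ := hy
  refine ⟨a * c - b * d, a * d + b * c - b * d, ?_⟩
  push_cast
  linear_combination (b : ℂ) * d * zeta3_quad
lemma Eis_sqrtm3 : sqrtm3 ∈ Eis := ⟨1, 2, by push_cast [sqrtm3]; ring⟩
lemma zeta3_abs : (starRingEnd ℂ) zeta3 * zeta3 = 1 := by
  have h : (2 * Real.pi * Complex.I / 3) = ((2 * Real.pi / 3 : ℝ) : ℂ) * Complex.I := by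
    push_cast; ring
  have habs : ‖zeta3‖ = 1 := by
    rw [zeta3, h, Complex.norm_exp_ofReal_mul_I]
  have := Complex.mul_conj zeta3
  rw [← Complex.sq_norm, habs] at this
  rw [mul_comm] at this
  simpa using this
lemma conj_zeta3 : (starRingEnd ℂ) zeta3 = zeta3 ^ 2 := by
  have h3 : zeta3 ^ 2 * zeta3 = 1 := by
    have := zeta3_pow_three; linear_combination this
  calc (starRingEnd ℂ) zeta3 = (starRingEnd ℂ) zeta3 * (zeta3 * zeta3 ^ 2) := by
        rw [mul_comm zeta3]; rw [h3]; ring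
    _ = ((starRingEnd ℂ) zeta3 * zeta3) * zeta3 ^ 2 := by ring
    _ = zeta3 ^ 2 := by rw [zeta3_abs]; ring
lemma Eis_conj {x : ℂ} (hx : x ∈ Eis) : (starRingEnd ℂ) x ∈ Eis := by
  obtain ⟨a, b, rfl⟩ := hx
  refine ⟨a - b, -b, ?_⟩
  rw [map_add, _root_.map_mul]
  simp [conj_zeta3]
  linear_combination (b:ℂ) * zeta3_quad
lemma sqrtm3_sq : sqrtm3 * sqrtm3 = -3 := by
  rw [sqrtm3]; linear_combination 4 * zeta3_quad
lemma conj_sqrtm3 : (starRingEnd ℂ) sqrtm3 = -sqrtm3 := by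
  rw [sqrtm3]
  rw [map_add, _root_.map_mul, conj_zeta3, Complex.conj_ofNat]
  simp
  linear_combination 2 * zeta3_quad

def pswap : Fin 3 → Fin 3 := ![2, 1, 0]

lemma Gamma_decomp' {g : Matrix (Fin 3) (Fin 3) ℂ} (hg : g ∈ GammaSqrt3) :
    ∃ A : Matrix (Fin 3) (Fin 3) ℂ, (∀ i j, A i j ∈ Eis) ∧ g = 1 + sqrtm3 • A := by
  refine ⟨Matrix.of fun i j => (hg.2 i j).choose, fun i j => (hg.2 i j).choose_spec.1, ?_⟩
  ext i j
  have h := (hg.2 i j).choose_spec.2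
  simp only [Matrix.add_apply, Matrix.smul_apply, Matrix.of_apply, smul_eq_mul]
  linear_combination h

lemma Gamma_mul {g h : Matrix (Fin 3) (Fin 3) ℂ} (hg : g ∈ GammaSqrt3) (hh : h ∈ GammaSqrt3) :
    g * h ∈ GammaSqrt3 := by
  obtain ⟨A, hA, hgA⟩ := Gamma_decomp' hg
  obtain ⟨B, hB, hhB⟩ := Gamma_decomp' hh
  refine ⟨⟨⟨?_, ?_⟩, ?_⟩, ?_⟩
  · rw [Matrix.det_mul, hg.1.1.1, hh.1.1.1, mul_one]
  · rw [Matrix.conjTranspose_mul]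
    have e1 : hᴴ * gᴴ * Jmat * (g * h) = hᴴ * (gᴴ * Jmat * g) * h := by
      simp only [Matrix.mul_assoc]
    rw [e1, hg.1.1.2, hh.1.1.2]
  · intro i j
    rw [Matrix.mul_apply, Fin.sum_univ_three]
    exact Eis_add (Eis_add (Eis_mul (hg.1.2 i 0) (hh.1.2 0 j))
      (Eis_mul (hg.1.2 i 1) (hh.1.2 1 j))) (Eis_mul (hg.1.2 i 2) (hh.1.2 2 j))
  · intro i j
    refine ⟨A i j + B i j + sqrtm3 * ((A * B) i j), ?_, ?_⟩
    · refine Eis_add (Eis_add (hA i j) (hB i j)) (Eis_mul Eis_sqrtm3 ?_)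
      rw [Matrix.mul_apply, Fin.sum_univ_three]
      exact Eis_add (Eis_add (Eis_mul (hA i 0) (hB 0 j)) (Eis_mul (hA i 1) (hB 1 j)))
        (Eis_mul (hA i 2) (hB 2 j))
    · have key : g * h - 1 = sqrtm3 • (A + B + sqrtm3 • (A * B)) := by
        rw [hgA, hhB]
        rw [add_mul, mul_add, mul_add, one_mul, mul_one]
        rw [smul_mul_smul_comm, sqrtm3_sq]
        ext a b
        simp [Matrix.add_apply, Matrix.smul_apply, Matrix.sub_apply, Matrix.one_apply]
        linear_combination (-((A * B) a b)) * sqrtm3_sq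
      have := congrFun (congrFun key i) j
      simp only [Matrix.sub_apply, Matrix.smul_apply, smul_eq_mul] at this
      rw [this]
      simp [Matrix.add_apply, Matrix.smul_apply]
      try ring

lemma one_mem_Gamma : (1 : Matrix (Fin 3) (Fin 3) ℂ) ∈ GammaSqrt3 := by
  refine ⟨⟨⟨Matrix.det_one, by rw [Matrix.conjTranspose_one, Matrix.one_mul, Matrix.mul_one]⟩, ?_⟩, ?_⟩
  · intro i j
    by_cases h : i = j <;> simp [Matrix.one_apply, h, Eis_one, Eis_zero]
  · intro i j
    exact ⟨0, Eis_zero, by ring⟩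

lemma one_mem_Upsilon : (1 : Matrix (Fin 3) (Fin 3) ℂ) ∈ Upsilon :=
  ⟨one_mem_Gamma, 0, Eis_zero, by simp⟩

lemma Upsilon_mul {g h : Matrix (Fin 3) (Fin 3) ℂ} (hg : g ∈ Upsilon) (hh : h ∈ Upsilon) :
    g * h ∈ Upsilon := by
  refine ⟨Gamma_mul hg.1 hh.1, ?_⟩
  obtain ⟨s, hsE, hs⟩ := hg.2
  obtain ⟨t, htE, ht⟩ := hh.2
  obtain ⟨b1, hb1E, hb1⟩ := hg.1.2 0 1
  obtain ⟨b2, hb2E, hb2⟩ := hg.1.2 0 2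
  obtain ⟨c1, hc1E, hc1⟩ := hh.1.2 1 0
  obtain ⟨c2, hc2E, hc2⟩ := hh.1.2 2 0
  simp only [Matrix.one_apply_ne (by decide : (0:Fin 3) ≠ 1), Matrix.one_apply_ne (by decide : (0:Fin 3) ≠ 2),
    Matrix.one_apply_ne (by decide : (1:Fin 3) ≠ 0), Matrix.one_apply_ne (by decide : (2:Fin 3) ≠ 0),
    sub_zero] at hb1 hb2 hc1 hc2
  refine ⟨s + t + 3 * s * t - b1 * c1 - b2 * c2, ?_, ?_⟩
  · refine Eis_sub (Eis_sub (Eis_add (Eis_add hsE htE) (Eis_mul (Eis_mul (Eis_int 3) hsE) htE)) (Eis_mul hb1E hc1E)) (Eis_mul hb2E hc2E)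
  · rw [Matrix.mul_apply, Fin.sum_univ_three]
    have e0 : g 0 0 = 1 + 3 * s := by linear_combination hs
    have e1 : h 0 0 = 1 + 3 * t := by linear_combination ht
    rw [e0, e1, hb1, hb2, hc1, hc2]
    linear_combination (b1 * c1 + b2 * c2) * sqrtm3_sq

lemma Jmat_mul_Jmat : Jmat * Jmat = 1 := by
  ext i j
  fin_cases i <;> fin_cases j <;>
    simp [Jmat, Matrix.mul_apply, Fin.sum_univ_three, Matrix.one_apply, Matrix.vecHead, Matrix.vecTail]

lemma JhJ_apply (g : Matrix (Fin 3) (Fin 3) ℂ) (i j : Fin 3) :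
    (Jmat * gᴴ * Jmat) i j = (starRingEnd ℂ) (g (pswap j) (pswap i)) := by
  fin_cases i <;> fin_cases j <;>
    simp [Jmat, pswap, Matrix.mul_apply, Fin.sum_univ_three, Matrix.conjTranspose_apply,
      Matrix.vecHead, Matrix.vecTail, Matrix.vecMul, dotProduct]

lemma left_inv_of_SU21 {g : Matrix (Fin 3) (Fin 3) ℂ} (hsu : g ∈ SU21) :
    (Jmat * gᴴ * Jmat) * g = 1 := by
  have : (Jmat * gᴴ * Jmat) * g = Jmat * (gᴴ * Jmat * g) := by
    simp only [Matrix.mul_assoc]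
  rw [this, hsu.2, Jmat_mul_Jmat]

lemma su21_of_inv {g h : Matrix (Fin 3) (Fin 3) ℂ} (hsu : gᴴ * Jmat * g = Jmat)
    (hr : g * h = 1) : hᴴ * Jmat * h = Jmat := by
  calc hᴴ * Jmat * h = hᴴ * (gᴴ * Jmat * g) * h := by rw [hsu]
    _ = (g * h)ᴴ * Jmat * (g * h) := by
        rw [Matrix.conjTranspose_mul]; simp only [Matrix.mul_assoc]
    _ = Jmat := by rw [hr, Matrix.conjTranspose_one, Matrix.one_mul, Matrix.mul_one]

lemma Gamma_inv_mem {g : Matrix (Fin 3) (Fin 3) ℂ} (hg : g ∈ GammaSqrt3) :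
    g⁻¹ ∈ GammaSqrt3 ∧ g⁻¹ = Jmat * gᴴ * Jmat := by
  obtain ⟨h, hh⟩ : ∃ h, h = Jmat * gᴴ * Jmat := ⟨_, rfl⟩
  have hl : h * g = 1 := by rw [hh]; exact left_inv_of_SU21 hg.1.1
  have hr : g * h = 1 := mul_eq_one_comm.mp hl
  have hinv : g⁻¹ = h := Matrix.inv_eq_left_inv hl
  rw [hinv]
  rw [hh] at hl hr ⊢
  refine ⟨⟨⟨⟨?_, ?_⟩, ?_⟩, ?_⟩, rfl⟩
  · have := congrArg Matrix.det hl
    rw [Matrix.det_mul, hg.1.1.1, mul_one, Matrix.det_one] at this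
    exact this
  · exact su21_of_inv hg.1.1.2 hr
  · intro i j
    rw [JhJ_apply]
    exact Eis_conj (hg.1.2 _ _)
  · intro i j
    obtain ⟨t, htE, ht⟩ := hg.2 (pswap j) (pswap i)
    refine ⟨-((starRingEnd ℂ) t), Eis_neg (Eis_conj htE), ?_⟩
    rw [JhJ_apply]
    have h1 : (1 : Matrix (Fin 3) (Fin 3) ℂ) i j
        = (starRingEnd ℂ) ((1 : Matrix (Fin 3) (Fin 3) ℂ) (pswap j) (pswap i)) := by
      fin_cases i <;> fin_cases j <;> simp [pswap, Matrix.one_apply]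
    rw [h1, ← map_sub, ht, _root_.map_mul, conj_sqrtm3]
    ring

lemma Upsilon_inv {g : Matrix (Fin 3) (Fin 3) ℂ} (hg : g ∈ Upsilon) : g⁻¹ ∈ Upsilon := by
  obtain ⟨hmem, hform⟩ := Gamma_inv_mem hg.1
  refine ⟨hmem, ?_⟩
  have hl : (Jmat * gᴴ * Jmat) * g = 1 := left_inv_of_SU21 hg.1.1.1
  rw [← hform] at hl
  obtain ⟨x, hxE, hx⟩ := hmem.2 0 0
  obtain ⟨b1, hb1E, hb1⟩ := hmem.2 0 1
  obtain ⟨b2, hb2E, hb2⟩ := hmem.2 0 2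
  obtain ⟨c1, hc1E, hc1⟩ := hg.1.2 1 0
  obtain ⟨c2, hc2E, hc2⟩ := hg.1.2 2 0
  obtain ⟨u, huE, hu⟩ := hg.2
  simp only [Matrix.one_apply_ne (by decide : (0:Fin 3) ≠ 1), Matrix.one_apply_ne (by decide : (0:Fin 3) ≠ 2),
    Matrix.one_apply_ne (by decide : (1:Fin 3) ≠ 0), Matrix.one_apply_ne (by decide : (2:Fin 3) ≠ 0),
    sub_zero] at hb1 hb2 hc1 hc2
  have hone : (1 : Matrix (Fin 3) (Fin 3) ℂ) 0 0 = 1 := by simp [Matrix.one_apply]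
  rw [hone] at hx
  have e := congrFun (congrFun hl 0) 0
  simp only [Matrix.mul_apply, Fin.sum_univ_three, hone] at e
  have E0 : g⁻¹ 0 0 = 1 + sqrtm3 * x := by linear_combination hx
  have F0 : g 0 0 = 1 + 3 * u := by linear_combination hu
  rw [E0, hb1, hb2, F0, hc1, hc2] at e
  refine ⟨-u - sqrtm3 * u * x + b1 * c1 + b2 * c2, ?_, ?_⟩
  · exact Eis_add (Eis_add (Eis_sub (Eis_neg huE) (Eis_mul (Eis_mul Eis_sqrtm3 huE) hxE))
      (Eis_mul hb1E hc1E)) (Eis_mul hb2E hc2E)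
  · rw [E0]
    linear_combination e - (b1 * c1 + b2 * c2) * sqrtm3_sq

lemma zeta3_ne_zero : zeta3 ≠ 0 := by
  intro h
  have := zeta3_pow_three
  rw [h] at this
  norm_num at this

lemma smul_mem_Gamma {c : ℂ} (hcE : c ∈ Eis) (hc3 : c ^ 3 = 1)
    (hcu : (starRingEnd ℂ) c * c = 1) {e : ℂ} (heE : e ∈ Eis) (hce : c - 1 = sqrtm3 * e)
    {g : Matrix (Fin 3) (Fin 3) ℂ} (hg : g ∈ GammaSqrt3) : c • g ∈ GammaSqrt3 := by
  refine ⟨⟨⟨?_, ?_⟩, ?_⟩, ?_⟩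
  · rw [Matrix.det_smul, hg.1.1.1, Fintype.card_fin, hc3, mul_one]
  · rw [Matrix.conjTranspose_smul, Matrix.smul_mul, Matrix.smul_mul, Matrix.mul_smul,
      smul_smul, show (star c : ℂ) = (starRingEnd ℂ) c from rfl, hcu, one_smul, hg.1.1.2]
  · intro i j
    rw [Matrix.smul_apply, smul_eq_mul]
    exact Eis_mul hcE (hg.1.2 i j)
  · intro i j
    obtain ⟨t, htE, ht⟩ := hg.2 i j
    have h1 : (1 : Matrix (Fin 3) (Fin 3) ℂ) i j ∈ Eis := by
      by_cases h : i = j <;> simp [Matrix.one_apply, h, Eis_one, Eis_zero]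
    refine ⟨c * t + e * ((1 : Matrix (Fin 3) (Fin 3) ℂ) i j), Eis_add (Eis_mul hcE htE) (Eis_mul heE h1), ?_⟩
    rw [Matrix.smul_apply, smul_eq_mul]
    linear_combination c * ht + ((1 : Matrix (Fin 3) (Fin 3) ℂ) i j) * hce

lemma Eis_zeta3_sq : zeta3 ^ 2 ∈ Eis := ⟨-1, -1, by push_cast; linear_combination zeta3_quad⟩

lemma zeta3_sq_cube : (zeta3 ^ 2) ^ 3 = 1 := by
  have := zeta3_pow_three; linear_combination (zeta3 ^ 3 + 1) * this

lemma zeta3_sq_unit : (starRingEnd ℂ) (zeta3 ^ 2) * zeta3 ^ 2 = 1 := by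
  rw [pow_two, _root_.map_mul]
  calc (starRingEnd ℂ) zeta3 * (starRingEnd ℂ) zeta3 * (zeta3 * zeta3)
      = ((starRingEnd ℂ) zeta3 * zeta3) * ((starRingEnd ℂ) zeta3 * zeta3) := by ring
    _ = 1 := by rw [zeta3_abs]; ring

lemma zeta3_sub_one : zeta3 - 1 = sqrtm3 * (1 + zeta3) := by
  rw [sqrtm3]; linear_combination (-2 : ℂ) * zeta3_quad

lemma zeta3_sq_sub_one : zeta3 ^ 2 - 1 = sqrtm3 * zeta3 := by
  rw [sqrtm3]; linear_combination (-1 : ℂ) * zeta3_quad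

lemma no3 {x y : ℤ} {w : ℂ} (hw : w ∈ Eis) (h : (x : ℂ) + (y : ℂ) * zeta3 = 3 * w) :
    3 ∣ x ∧ 3 ∣ y := by
  obtain ⟨p, q, rfl⟩ := hw
  have : (x : ℂ) + (y : ℂ) * zeta3 = ((3 * p : ℤ) : ℂ) + ((3 * q : ℤ) : ℂ) * zeta3 := by
    push_cast; linear_combination h
  obtain ⟨h1, h2⟩ := eis_repr_unique this
  exact ⟨⟨p, h1⟩, ⟨q, h2⟩⟩

lemma one_mem_Zcentre : (1 : Matrix (Fin 3) (Fin 3) ℂ) ∈ Zcentre := by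
  left; rfl

lemma zsmul_mem_Zcentre : zeta3 • (1 : Matrix (Fin 3) (Fin 3) ℂ) ∈ Zcentre := by
  right; left; rfl

lemma zsq_smul_mem_Zcentre : zeta3 ^ 2 • (1 : Matrix (Fin 3) (Fin 3) ℂ) ∈ Zcentre := by
  right; right; rfl

lemma decomp_exists {g : Matrix (Fin 3) (Fin 3) ℂ} (hg : g ∈ GammaSqrt3) :
    ∃ u z, u ∈ Upsilon ∧ z ∈ Zcentre ∧ g = u * z := by
  obtain ⟨t0, ht0E, ht0⟩ := hg.2 0 0
  obtain ⟨a, b, rfl⟩ := ht0E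
  have hone : (1 : Matrix (Fin 3) (Fin 3) ℂ) 0 0 = 1 := by simp [Matrix.one_apply]
  rw [hone] at ht0
  have hg00 : g 0 0 = 1 + sqrtm3 * ((a : ℂ) + (b : ℂ) * zeta3) := by linear_combination ht0
  have hs : sqrtm3 = 2 * zeta3 + 1 := rfl
  set n := a + b with hn
  set m := n / 3 with hm
  have hr : n % 3 = 0 ∨ n % 3 = 1 ∨ n % 3 = 2 := by omega
  rcases hr with h | h | h
  · -- g00 ≡ 1 mod 3
    have ha : a = 3 * m - b := by omega
    have ha' : (a : ℂ) = 3 * (m : ℂ) - (b : ℂ) := by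
      rw [ha]; push_cast; ring
    refine ⟨g, 1, ⟨hg, ((m - b : ℤ) : ℂ) + ((2 * m - b : ℤ) : ℂ) * zeta3,
      ⟨m - b, 2 * m - b, rfl⟩, ?_⟩, one_mem_Zcentre, (mul_one g).symm⟩
    rw [hg00, ha']
    push_cast
    linear_combination (3 * (m : ℂ) - b + b * zeta3) * hs + 2 * (b : ℂ) * zeta3_quad
  · -- g00 ≡ ζ² mod 3, u = ζ • g
    have ha : a = 3 * m + 1 - b := by omega
    have ha' : (a : ℂ) = 3 * (m : ℂ) + 1 - (b : ℂ) := by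
      rw [ha]; push_cast; ring
    refine ⟨zeta3 • g, zeta3 ^ 2 • 1,
      ⟨smul_mem_Gamma Eis_zeta3 zeta3_pow_three zeta3_abs (Eis_add Eis_one Eis_zeta3)
        zeta3_sub_one hg,
        ((b - 2 * m - 1 : ℤ) : ℂ) + ((-m : ℤ) : ℂ) * zeta3, ⟨b - 2 * m - 1, -m, rfl⟩, ?_⟩,
      zsq_smul_mem_Zcentre, ?_⟩
    · rw [Matrix.smul_apply, smul_eq_mul, hg00, ha']
      push_cast
      linear_combination (zeta3 * (3 * (m : ℂ) + 1 - b + b * zeta3)) * hs +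
        (2 * (b : ℂ) * zeta3 + 6 * (m : ℂ) + 2 - 3 * b) * zeta3_quad
    · rw [smul_mul_assoc, mul_smul_comm, mul_one, smul_smul,
        show zeta3 * zeta3 ^ 2 = zeta3 ^ 3 by ring, zeta3_pow_three, one_smul]
  · -- g00 ≡ ζ mod 3, u = ζ² • g
    have ha : a = 3 * m + 2 - b := by omega
    have ha' : (a : ℂ) = 3 * (m : ℂ) + 2 - (b : ℂ) := by
      rw [ha]; push_cast; ring
    refine ⟨zeta3 ^ 2 • g, zeta3 • 1,
      ⟨smul_mem_Gamma Eis_zeta3_sq zeta3_sq_cube zeta3_sq_unit Eis_zeta3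
        zeta3_sq_sub_one hg,
        ((m : ℤ) : ℂ) + ((b - m - 1 : ℤ) : ℂ) * zeta3, ⟨m, b - m - 1, rfl⟩, ?_⟩,
      zsmul_mem_Zcentre, ?_⟩
    · rw [Matrix.smul_apply, smul_eq_mul, hg00, ha']
      push_cast
      linear_combination (zeta3 ^ 2 * (3 * (m : ℂ) + 2 - b + b * zeta3)) * hs +
        (2 * (b : ℂ) * zeta3 ^ 2 + (6 * (m : ℂ) + 4 - 3 * b) * zeta3 - 1 - 3 * m) * zeta3_quad
    · rw [smul_mul_assoc, mul_smul_comm, mul_one, smul_smul,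
        show zeta3 ^ 2 * zeta3 = zeta3 ^ 3 by ring, zeta3_pow_three, one_smul]

lemma decomp_unique {u1 z1 u2 z2 : Matrix (Fin 3) (Fin 3) ℂ}
    (h1 : u1 ∈ Upsilon) (hz1 : z1 ∈ Zcentre) (h2 : u2 ∈ Upsilon) (hz2 : z2 ∈ Zcentre)
    (he : u1 * z1 = u2 * z2) : u1 = u2 ∧ z1 = z2 := by
  obtain ⟨t1, ht1E, ht1⟩ := h1.2
  obtain ⟨t2, ht2E, ht2⟩ := h2.2
  have main : ∀ c1 c2 : ℂ, c1 ∈ Eis → c2 ∈ Eis → z1 = c1 • 1 → z2 = c2 • 1 →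
      ∃ w ∈ Eis, c1 - c2 = 3 * w := by
    intro c1 c2 hc1E hc2E hc1 hc2
    rw [hc1, hc2, mul_smul_comm, mul_smul_comm, mul_one, mul_one] at he
    have key := congrFun (congrFun he 0) 0
    simp only [Matrix.smul_apply, smul_eq_mul] at key
    exact ⟨c2 * t2 - c1 * t1, Eis_sub (Eis_mul hc2E ht2E) (Eis_mul hc1E ht1E),
      by linear_combination key - c1 * ht1 + c2 * ht2⟩
  have cancel : ∀ c : ℂ, c ≠ 0 → z1 = c • 1 → z2 = c • 1 → u1 = u2 ∧ z1 = z2 := by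
    intro c hc hc1 hc2
    rw [hc1, hc2, mul_smul_comm, mul_smul_comm, mul_one, mul_one] at he
    exact ⟨smul_right_injective _ hc he, hc1.trans hc2.symm⟩
  have hzsq_ne : zeta3 ^ 2 ≠ 0 := pow_ne_zero 2 zeta3_ne_zero
  rcases hz1 with h1' | h1' | h1' <;> rcases hz2 with h2' | h2' | h2'
  · exact cancel 1 one_ne_zero (by rw [h1', one_smul]) (by rw [h2', one_smul])
  · obtain ⟨w, hwE, hw⟩ := main 1 zeta3 Eis_one Eis_zeta3 (by rw [h1', one_smul]) h2'
    have hcast : ((1 : ℤ) : ℂ) + ((-1 : ℤ) : ℂ) * zeta3 = 3 * w := by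
      push_cast; linear_combination hw
    obtain ⟨⟨k, hk⟩, -⟩ := no3 hwE hcast
    omega
  · obtain ⟨w, hwE, hw⟩ := main 1 (zeta3 ^ 2) Eis_one Eis_zeta3_sq (by rw [h1', one_smul]) h2'
    have hcast : ((2 : ℤ) : ℂ) + ((1 : ℤ) : ℂ) * zeta3 = 3 * w := by
      push_cast; linear_combination hw + zeta3_quad
    obtain ⟨⟨k, hk⟩, -⟩ := no3 hwE hcast
    omega
  · obtain ⟨w, hwE, hw⟩ := main zeta3 1 Eis_zeta3 Eis_one h1' (by rw [h2', one_smul])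
    have hcast : ((-1 : ℤ) : ℂ) + ((1 : ℤ) : ℂ) * zeta3 = 3 * w := by
      push_cast; linear_combination hw
    obtain ⟨⟨k, hk⟩, -⟩ := no3 hwE hcast
    omega
  · exact cancel zeta3 zeta3_ne_zero h1' h2'
  · obtain ⟨w, hwE, hw⟩ := main zeta3 (zeta3 ^ 2) Eis_zeta3 Eis_zeta3_sq h1' h2'
    have hcast : ((1 : ℤ) : ℂ) + ((2 : ℤ) : ℂ) * zeta3 = 3 * w := by
      push_cast; linear_combination hw + zeta3_quad
    obtain ⟨⟨k, hk⟩, -⟩ := no3 hwE hcast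
    omega
  · obtain ⟨w, hwE, hw⟩ := main (zeta3 ^ 2) 1 Eis_zeta3_sq Eis_one h1' (by rw [h2', one_smul])
    have hcast : ((-2 : ℤ) : ℂ) + ((-1 : ℤ) : ℂ) * zeta3 = 3 * w := by
      push_cast; linear_combination hw - zeta3_quad
    obtain ⟨⟨k, hk⟩, -⟩ := no3 hwE hcast
    omega
  · obtain ⟨w, hwE, hw⟩ := main (zeta3 ^ 2) zeta3 Eis_zeta3_sq Eis_zeta3 h1' h2'
    have hcast : ((-1 : ℤ) : ℂ) + ((-2 : ℤ) : ℂ) * zeta3 = 3 * w := by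
      push_cast; linear_combination hw - zeta3_quad
    obtain ⟨⟨k, hk⟩, -⟩ := no3 hwE hcast
    omega
  · exact cancel (zeta3 ^ 2) hzsq_ne h1' h2'

/-- `Υ` is a subgroup of `Γ(√−3)` and `Γ(√−3)` is the internal direct product
`Υ × Z`: every element of `Γ(√−3)` is uniquely a product of an element of `Υ`
and an element of `Z`. -/
theorem GammaSqrt3_internal_direct_product :
    ((1 : Matrix (Fin 3) (Fin 3) ℂ) ∈ Upsilon) ∧
    (∀ g ∈ Upsilon, ∀ h ∈ Upsilon, g * h ∈ Upsilon) ∧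
    (∀ g ∈ Upsilon, g⁻¹ ∈ Upsilon) ∧
    (Upsilon ⊆ GammaSqrt3) ∧
    (∀ g ∈ GammaSqrt3,
      ∃! p : Matrix (Fin 3) (Fin 3) ℂ × Matrix (Fin 3) (Fin 3) ℂ,
        p.1 ∈ Upsilon ∧ p.2 ∈ Zcentre ∧ g = p.1 * p.2) := by
  refine ⟨one_mem_Upsilon, fun g hg h hh => Upsilon_mul hg hh, fun g hg => Upsilon_inv hg,
    fun g hg => hg.1, fun g hg => ?_⟩
  obtain ⟨u, z, hu, hz, hgz⟩ := decomp_exists hg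
  refine ⟨(u, z), ⟨hu, hz, hgz⟩, ?_⟩
  rintro ⟨u2, z2⟩ ⟨h2u, h2z, h2e⟩
  obtain ⟨hu1, hz1⟩ := decomp_unique h2u h2z hu hz (h2e.symm.trans hgz)
  exact Prod.ext hu1 hz1
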